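/- Let Γ be a finite simple connected graph with at least two vertices that contains no induced path P_4 on four vertices. Then Γ splits as a nontrivial join: its complement graph is disconnected. -/

import Mathlib

open SimpleGraph

private lemma reach_closed {V : Type*} (G : SimpleGraph V) (C : Set V)
    (hC : ∀ ⦃x y⦄, x ∈ C → G.Adj x y → y ∈ C) :
    ∀ ⦃u v : V⦄, G.Reachable u v → u ∈ C → v ∈ C := by
  intro u v h
  obtain ⟨w⟩ := h
  induction w with
  | nil => exact id
  | cons h p ih => exact fun hu => ih (hC hu h)

private lemma walk_change {V : Type*} {G : SimpleGraph V} (P : V → Prop) :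
    ∀ {u v : V} (w : G.Walk u v), P u → ¬ P v →
      ∃ p q, G.Adj p q ∧ P p ∧ ¬ P q ∧ G.Reachable u p ∧ G.Reachable u q := by
  intro u v w
  induction w with
  | nil => exact fun h h' => absurd h h'
  | @cons a b c h p ih =>
    intro hu hv
    by_cases hb : P b
    · obtain ⟨p', q', h1, h2, h3, h4, h5⟩ := ih hb hv
      exact ⟨p', q', h1, h2, h3, h.reachable.trans h4, h.reachable.trans h5⟩
    · exact ⟨a, b, h, hu, hb, Reachable.refl a, h.reachable⟩

private lemma first_step {V : Type*} {G : SimpleGraph V} {u v : V}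
    (h : G.Reachable u v) (hne : u ≠ v) : ∃ w, G.Adj u w := by
  obtain ⟨p⟩ := h
  cases p with
  | nil => exact absurd rfl hne
  | cons h _ => exact ⟨_, h⟩

private lemma p4_embed {α : Type*} {Γ : SimpleGraph α} {a b c d : α}
    (hab : Γ.Adj a b) (hbc : Γ.Adj b c) (hcd : Γ.Adj c d)
    (hac : ¬ Γ.Adj a c) (hbd : ¬ Γ.Adj b d) (had : ¬ Γ.Adj a d) :
    Nonempty (SimpleGraph.pathGraph 4 ↪g Γ) := by
  have nab : a ≠ b := hab.ne
  have nbc : b ≠ c := hbc.ne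
  have ncd : c ≠ d := hcd.ne
  have nac : a ≠ c := fun h => had (h ▸ hcd)
  have nad : a ≠ d := fun h => hac (h ▸ hcd.symm)
  have nbd : b ≠ d := fun h => had (h ▸ hab)
  refine ⟨⟨⟨![a, b, c, d], ?_⟩, ?_⟩⟩
  · intro i j hij
    fin_cases i <;> fin_cases j <;>
      simp_all [nab, nbc, ncd, nac, nad, nbd, nab.symm, nbc.symm, ncd.symm,
        nac.symm, nad.symm, nbd.symm]
  · have sac : ¬ Γ.Adj c a := fun h => hac h.symm
    have sbd : ¬ Γ.Adj d b := fun h => hbd h.symm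
    have sad : ¬ Γ.Adj d a := fun h => had h.symm
    intro i j
    change Γ.Adj (![a, b, c, d] i) (![a, b, c, d] j) ↔ _
    fin_cases i <;> fin_cases j <;>
      simp [pathGraph_adj, hab, hbc, hcd, hac, hbd, had, hab.symm, hbc.symm, hcd.symm,
        sac, sbd, sad] <;> decide

private lemma cograph_aux : ∀ (n : ℕ) (α : Type) [Fintype α] (Γ : SimpleGraph α),
    Fintype.card α = n → Γ.Connected → 2 ≤ Fintype.card α →
    IsEmpty (SimpleGraph.pathGraph 4 ↪g Γ) → ¬ Γᶜ.Connected := by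
  intro n
  induction n using Nat.strong_induction_on with
  | _ n IH =>
  intro α _ Γ hn hconn hcard hP4 hcc
  classical
  obtain ⟨v⟩ : Nonempty α := Fintype.card_pos_iff.mp (by omega)
  set s : Set α := {v}ᶜ with hs
  -- there is a vertex nonadjacent to v
  have hz : ∃ z, z ≠ v ∧ ¬ Γ.Adj v z := by
    by_contra h
    push_neg at h
    obtain ⟨u, hu⟩ := Fintype.exists_ne_of_one_lt_card (by omega) v
    obtain ⟨w, hw⟩ := first_step (hcc.preconnected v u) hu.symm
    rw [compl_adj] at hw
    exact hw.2 (h w (Ne.symm hw.1))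
  obtain ⟨z, hzv, hvz⟩ := hz
  have hzs : z ∈ s := by simp [hs, hzv]
  have hcards : Fintype.card ↥s = n - 1 := by
    have h1 : Fintype.card ↥s = Fintype.card {x : α // ¬ x = v} :=
      Fintype.card_congr (Equiv.subtypeEquivRight (by simp [hs]))
    rw [h1, Fintype.card_subtype_compl, Fintype.card_subtype_eq, hn]
  by_cases hH : (Γ.induce s).Connected
  · rcases Nat.lt_or_ge n 3 with h3 | h3
    · -- n = 2 : contradiction with hvz
      obtain ⟨w, hw⟩ := first_step (hconn.preconnected v z) hzv.symm
      have hwz : w = z := by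
        by_contra hwz
        have : 2 < Fintype.card α := Fintype.two_lt_card_iff.mpr ⟨v, w, z, hw.ne, hzv.symm, hwz⟩
        omega
      exact hvz (hwz ▸ hw)
    · have hcards2 : 2 ≤ Fintype.card ↥s := by omega
      have hP4' : IsEmpty (pathGraph 4 ↪g Γ.induce s) :=
        ⟨fun e => hP4.false ((Embedding.induce s).comp e)⟩
      have hnc := IH (n - 1) (by omega) ↥s (Γ.induce s) hcards hH hcards2 hP4'
      haveI hsne : Nonempty ↥s := Fintype.card_pos_iff.mp (by omega)
      have hpre : ¬ (Γ.induce s)ᶜ.Preconnected := fun hp => hnc ⟨hp⟩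
      simp only [SimpleGraph.Preconnected] at hpre
      push_neg at hpre
      obtain ⟨x₀, y₀, hxy⟩ := hpre
      obtain ⟨w₀, hw₀⟩ := first_step (hconn.preconnected v z) hzv.symm
      have hw₀s : w₀ ∈ s := by simp [hs]; exact hw₀.ne'
      set w : ↥s := ⟨w₀, hw₀s⟩ with hwdef
      set A : Set ↥s := {y | ((Γ.induce s)ᶜ).Reachable w y} with hA
      have hwA : w ∈ A := Reachable.refl w
      have hkey : ∀ (a b1 : ↥s), a ∈ A → b1 ∉ A → Γ.Adj ↑a ↑b1 := by
        intro a b1 ha hb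
        by_contra hadj
        have hne : a ≠ b1 := fun h => hb (h ▸ ha)
        have hadj' : ((Γ.induce s)ᶜ).Adj a b1 := by
          rw [compl_adj]
          exact ⟨hne, fun h => hadj h⟩
        exact hb (ha.trans hadj'.reachable)
      have hBne : ∃ b1 : ↥s, b1 ∉ A := by
        by_cases hx : x₀ ∈ A
        · exact ⟨y₀, fun hy => hxy (hx.symm.trans hy)⟩
        · exact ⟨x₀, hx⟩
      by_cases hAall : ∀ p ∈ A, Γ.Adj v ↑p
      · set C : Set α := Subtype.val '' A with hC
        have hclosed : ∀ ⦃x y⦄, x ∈ C → Γᶜ.Adj x y → y ∈ C := by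
          intro x y hx hxy
          obtain ⟨a, ha, rfl⟩ := hx
          rw [compl_adj] at hxy
          have hyv : y ≠ v := by
            rintro rfl
            exact hxy.2 ((hAall a ha).symm)
          have hys : y ∈ s := by simp [hs, hyv]
          have hadj' : ((Γ.induce s)ᶜ).Adj a ⟨y, hys⟩ := by
            rw [compl_adj]
            exact ⟨fun h => hxy.1 (congrArg Subtype.val h), fun h => hxy.2 h⟩
          exact ⟨⟨y, hys⟩, ha.trans hadj'.reachable, rfl⟩
        have hvC := reach_closed Γᶜ C hclosed (hcc.preconnected ↑w v) ⟨w, hwA, rfl⟩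
        obtain ⟨a, _, ha⟩ := hvC
        have : (↑a : α) ≠ v := a.2
        exact this ha
      · push_neg at hAall
        obtain ⟨a, haA, hva⟩ := hAall
        by_cases hBall : ∀ q : ↥s, q ∉ A → Γ.Adj v ↑q
        · set C : Set α := Subtype.val '' {q : ↥s | q ∉ A} with hC
          have hclosed : ∀ ⦃x y⦄, x ∈ C → Γᶜ.Adj x y → y ∈ C := by
            intro x y hx hxy
            obtain ⟨b, hb, rfl⟩ := hx
            rw [compl_adj] at hxy
            have hyv : y ≠ v := by
              rintro rfl
              exact hxy.2 ((hBall b hb).symm)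
            have hys : y ∈ s := by simp [hs, hyv]
            refine ⟨⟨y, hys⟩, ?_, rfl⟩
            intro hyA
            apply hb
            have hadj' : ((Γ.induce s)ᶜ).Adj ⟨y, hys⟩ b := by
              rw [compl_adj]
              exact ⟨fun h => hxy.1 (congrArg Subtype.val h).symm,
                fun h => hxy.2 h.symm⟩
            exact hyA.trans hadj'.reachable
          obtain ⟨b1, hb1⟩ := hBne
          have hvC := reach_closed Γᶜ C hclosed (hcc.preconnected ↑b1 v) ⟨b1, hb1, rfl⟩
          obtain ⟨b, _, hb⟩ := hvC
          have : (↑b : α) ≠ v := b.2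
          exact this hb
        · push_neg at hBall
          obtain ⟨b1, hb1A, hvb⟩ := hBall
          obtain ⟨wk⟩ := haA
          obtain ⟨p, q, hpq, hPp, hPq, hrp, hrq⟩ :=
            walk_change (fun y : ↥s => Γ.Adj v ↑y) wk hw₀ hva
          have e2 : Γ.Adj ↑p ↑b1 := hkey p b1 hrp hb1A
          have e3 : Γ.Adj ↑b1 ↑q := (hkey q b1 hrq hb1A).symm
          have n2 : ¬ Γ.Adj ↑p ↑q := fun h => ((compl_adj _ _ _).mp hpq).2 h
          obtain ⟨e⟩ := p4_embed hPp e2 e3 hvb n2 hPq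
          exact hP4.false e
  · haveI hsne : Nonempty ↥s := ⟨⟨z, hzs⟩⟩
    have hpre : ¬ (Γ.induce s).Preconnected := fun hp => hH ⟨hp⟩
    simp only [SimpleGraph.Preconnected] at hpre
    push_neg at hpre
    obtain ⟨c, d, hcd⟩ := hpre
    obtain ⟨wk0⟩ := hconn.preconnected v z
    obtain ⟨p, q, hpq, hPp, hPq, _, _⟩ :=
      walk_change (fun y => Γ.Adj v y ∨ y = v) wk0 (Or.inr rfl) (by simp [hvz, hzv])
    have hvq : ¬ Γ.Adj v q := fun h => hPq (Or.inl h)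
    have hqv : q ≠ v := fun h => hPq (Or.inr h)
    have hvp : Γ.Adj v p := by
      rcases hPp with h | rfl
      · exact h
      · exact absurd hpq hvq
    have hps : p ∈ s := by simp [hs]; exact hvp.ne'
    have hqs : q ∈ s := by simp [hs, hqv]
    set D : Set ↥s := {y | (Γ.induce s).Reachable ⟨p, hps⟩ y} with hD
    have hpD : (⟨p, hps⟩ : ↥s) ∈ D := Reachable.refl _
    have hqD : (⟨q, hqs⟩ : ↥s) ∈ D := Adj.reachable (by exact hpq)
    have heD : ∃ e1 : ↥s, e1 ∉ D := by
      by_cases hc : c ∈ D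
      · exact ⟨d, fun hd => hcd (hc.symm.trans hd)⟩
      · exact ⟨c, hc⟩
    obtain ⟨e1, he1⟩ := heD
    obtain ⟨wk1⟩ := hconn.preconnected p ↑e1
    have hne1 : ¬ ((↑e1 : α) = v ∨ ∃ h : (↑e1 : α) ∈ s, (⟨↑e1, h⟩ : ↥s) ∈ D) := by
      rintro (h | ⟨h, hD1⟩)
      · exact (show (↑e1 : α) ≠ v from e1.2) h
      · exact he1 (by simpa using hD1)
    obtain ⟨g, b, hgb, hPg, hPb, _, _⟩ :=
      walk_change (fun y => y = v ∨ ∃ h : y ∈ s, (⟨y, h⟩ : ↥s) ∈ D) wk1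
        (Or.inr ⟨hps, hpD⟩) hne1
    · have hbv : b ≠ v := fun h => hPb (Or.inl h)
      have hbs : b ∈ s := by simp [hs, hbv]
      have hbD : (⟨b, hbs⟩ : ↥s) ∉ D := fun h => hPb (Or.inr ⟨hbs, h⟩)
      have hvb : Γ.Adj v b := by
        rcases hPg with rfl | ⟨hgs, hgD⟩
        · exact hgb
        · exact absurd (hgD.trans (Adj.reachable (by exact hgb :
            (Γ.induce s).Adj ⟨g, hgs⟩ ⟨b, hbs⟩))) hbD
      have hnbp : ¬ Γ.Adj b p := fun h => hbD ((Adj.reachable (by exact h.symm :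
        (Γ.induce s).Adj ⟨p, hps⟩ ⟨b, hbs⟩)))
      have hnbq : ¬ Γ.Adj b q := fun h => hbD (hqD.trans (Adj.reachable (by exact h.symm :
        (Γ.induce s).Adj ⟨q, hqs⟩ ⟨b, hbs⟩)))
      obtain ⟨e⟩ := p4_embed hvb.symm hvp hpq hnbp hvq hnbq
      exact hP4.false e

/-- A finite simple connected graph with at least two vertices and no induced path `P₄`
on four vertices splits as a nontrivial join: its complement graph is disconnected. -/
theorem cograph_connected_is_join {α : Type} [Fintype α] (Γ : SimpleGraph α)
    (hconn : Γ.Connected) (hcard : 2 ≤ Fintype.card α)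
    (hP4 : IsEmpty (SimpleGraph.pathGraph 4 ↪g Γ)) :
    ¬ Γᶜ.Connected := by
  exact cograph_aux (Fintype.card α) α Γ rfl hconn hcard hP4
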